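/- Let I be a non-meager P-ideal on ω containing all finite sets, and let D₀ and D₁ be two countable dense subsets of I. Then there exists a homeomorphism h : 2^ω → 2^ω (of the whole Cantor space, identified with P(ω)) such that h[D₀] = D₁ and h[I] = I. -/

import Mathlib

open Set

/-- A point of the Cantor space `α → Bool`, viewed as a subset of `α`
(the identification of `2^ω` with `𝒫(ω)` via characteristic functions). -/
def toSet {α : Type*} (x : α → Bool) : Set α := {a | x a = true}

/-- The copy of a family `F ⊆ 𝒫(α)` inside the Cantor space `α → Bool`. -/
def cantorCopy {α : Type*} (F : Set (Set α)) : Set (α → Bool) := toSet ⁻¹' F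

/-- `F` is a filter on `α`: contains the whole set, not `∅`, closed under
finite intersections and supersets. -/
def IsFilterOn {α : Type*} (F : Set (Set α)) : Prop :=
  Set.univ ∈ F ∧ ∅ ∉ F ∧ (∀ A B : Set α, A ∈ F → B ∈ F → A ∩ B ∈ F) ∧
    ∀ A B : Set α, A ∈ F → A ⊆ B → B ∈ F

/-- `F` extends the Fréchet filter: every cofinite set belongs to `F`. -/
def ExtendsFrechet {α : Type*} (F : Set (Set α)) : Prop :=
  ∀ A : Set α, Aᶜ.Finite → A ∈ F

/-- `F` is a P-filter: every countable subfamily has a pseudo-intersection in `F`. -/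
def IsPFilterOn {α : Type*} (F : Set (Set α)) : Prop :=
  ∀ X : ℕ → Set α, (∀ n, X n ∈ F) → ∃ Y ∈ F, ∀ n, (Y \ X n).Finite

/-- `F` is non-meager as a subset of the Cantor space `α → Bool`. -/
def NonMeagerFamily {α : Type*} (F : Set (Set α)) : Prop :=
  ¬ IsMeagre (cantorCopy F)

/-- `I` is an ideal on `α`: contains `∅`, not the whole set, closed under
finite unions and subsets. -/
def IsIdealOn {α : Type*} (I : Set (Set α)) : Prop :=
  ∅ ∈ I ∧ Set.univ ∉ I ∧ (∀ A B : Set α, A ∈ I → B ∈ I → A ∪ B ∈ I) ∧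
    ∀ A B : Set α, A ∈ I → B ⊆ A → B ∈ I

/-- `I` contains all finite sets. -/
def ContainsFinites {α : Type*} (I : Set (Set α)) : Prop :=
  ∀ A : Set α, A.Finite → A ∈ I

/-- `I` is a P-ideal: every countable subfamily has a member of `I`
almost containing each of them. -/
def IsPIdealOn {α : Type*} (I : Set (Set α)) : Prop :=
  ∀ X : ℕ → Set α, (∀ n, X n ∈ I) → ∃ Y ∈ I, ∀ n, (X n \ Y).Finite

/-- A topological space is countable dense homogeneous. -/
def CDH (X : Type*) [TopologicalSpace X] : Prop :=
  ∀ D E : Set X, D.Countable → Dense D → E.Countable → Dense E →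
    ∃ h : X ≃ₜ X, h '' D = E

/-- `D` is a (set-theoretic) subfamily of `F` that is dense in `F` with respect to
the subspace topology `F` inherits from the Cantor space. -/
def DenseIn {α : Type*} (D F : Set (Set α)) : Prop :=
  D ⊆ F ∧ cantorCopy F ⊆ closure (cantorCopy D)

namespace S14
open scoped Classical

/-- agreement below `c` -/
def Ag (c : ℕ) (x y : ℕ → Bool) : Prop := ∀ m, m < c → x m = y m

lemma Ag.mono {c c' : ℕ} {x y : ℕ → Bool} (h : Ag c x y) (hc : c' ≤ c) : Ag c' x y :=
  fun m hm => h m (lt_of_lt_of_le hm hc)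

lemma Ag.symm {c : ℕ} {x y : ℕ → Bool} (h : Ag c x y) : Ag c y x :=
  fun m hm => (h m hm).symm

lemma Ag.trans {c : ℕ} {x y z : ℕ → Bool} (h : Ag c x y) (h' : Ag c y z) : Ag c x z :=
  fun m hm => (h m hm).trans (h' m hm)

lemma find_eq {p q : ℕ → Prop} [DecidablePred p] [DecidablePred q]
    (h : ∀ n, p n ↔ q n) (hp : ∃ n, p n) (hq : ∃ n, q n) : Nat.find hp = Nat.find hq :=
  le_antisymm (Nat.find_le ((h _).mpr (Nat.find_spec hq)))
    (Nat.find_le ((h _).mp (Nat.find_spec hp)))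

section Mach

variable (M : ℕ → ℕ) (A B : ℕ → ℕ → Bool)

/-- the block of a coordinate -/
noncomputable def blk (n : ℕ) : ℕ := Nat.findGreatest (fun j => M j ≤ n) n

/-- whether `x` and `y` agree on block `j` -/
def BlkEq (j : ℕ) (x y : ℕ → Bool) : Prop := ∀ m, M j ≤ m → m < M (j+1) → x m = y m

/-- the index of the pair whose `B`-part prefix matches `x` -/
noncomputable def sel (j : ℕ) (x : ℕ → Bool) : Option ℕ :=
  if h : ∃ s, s < j ∧ Ag (M j) x (B s) then some (Nat.find h) else none

/-- the block-`j` move -/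
noncomputable def Phi (j : ℕ) (x : ℕ → Bool) : ℕ → Bool :=
  (sel M B j x).elim x (fun s n =>
      if M j ≤ n ∧ n < M (j+1) then
        if BlkEq M j x (A s) then B s n
        else if BlkEq M j x (B s) then A s n
        else x n
      else x n)

/-- the forward composition `Phi j ∘ ... ∘ Phi 0` -/
noncomputable def Gm : ℕ → (ℕ → Bool) → (ℕ → Bool)
  | 0 => Phi M A B 0
  | (j+1) => fun x => Phi M A B (j+1) (Gm j x)

/-- the backward composition `Phi 0 ∘ ... ∘ Phi j` -/
noncomputable def Tm : ℕ → (ℕ → Bool) → (ℕ → Bool)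
  | 0 => Phi M A B 0
  | (j+1) => fun x => Tm j (Phi M A B (j+1) x)

/-- the final homeomorphism -/
noncomputable def hh (x : ℕ → Bool) : ℕ → Bool := fun n => Gm M A B (blk M n) x n

/-- its inverse -/
noncomputable def hhi (x : ℕ → Bool) : ℕ → Bool := fun n => Tm M A B (blk M n) x n

variable {M A B}

section blkLemmas

lemma blk_le (hM0 : M 0 = 0) (n : ℕ) : M (blk M n) ≤ n :=
  Nat.findGreatest_spec (P := fun j => M j ≤ n) (Nat.zero_le n) (by simp [hM0])

lemma lt_blk_succ (hM : StrictMono M) (n : ℕ) : n < M (blk M n + 1) := by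
  by_contra h
  push_neg at h
  have h1 : blk M n + 1 ≤ n := le_trans (hM.le_apply) h
  exact Nat.findGreatest_is_greatest (Nat.lt_succ_self _) h1 h

lemma le_blk (hM : StrictMono M) {j n : ℕ} (h : M j ≤ n) : j ≤ blk M n :=
  Nat.le_findGreatest (le_trans hM.le_apply h) h

lemma blk_lt_of_lt (hM : StrictMono M) (hM0 : M 0 = 0) {j n : ℕ} (h : n < M j) :
    blk M n < j := by
  by_contra hc
  push_neg at hc
  exact absurd (le_trans (hM.monotone hc) (blk_le hM0 n)) (not_le.mpr h)

lemma blk_eq (hM : StrictMono M) (hM0 : M 0 = 0) {j n : ℕ} (h1 : M j ≤ n)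
    (h2 : n < M (j+1)) : blk M n = j :=
  le_antisymm (Nat.lt_succ_iff.mp (blk_lt_of_lt hM hM0 h2)) (le_blk hM h1)

lemma blk_mono {n n' : ℕ} (h : n ≤ n') : blk M n ≤ blk M n' :=
  Nat.findGreatest_mono (fun _ hj => le_trans hj h) h

end blkLemmas

lemma sel_congr {j : ℕ} {x y : ℕ → Bool} (h : Ag (M j) x y) :
    sel M B j x = sel M B j y := by
  unfold sel
  have hiff : ∀ s, (s < j ∧ Ag (M j) x (B s)) ↔ (s < j ∧ Ag (M j) y (B s)) := by
    intro s
    exact and_congr_right fun _ => ⟨fun hx => (h.symm).trans hx, fun hy => h.trans hy⟩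
  by_cases hx : ∃ s, s < j ∧ Ag (M j) x (B s)
  · have hy : ∃ s, s < j ∧ Ag (M j) y (B s) := by
      obtain ⟨s, hs⟩ := hx; exact ⟨s, (hiff s).mp hs⟩
    rw [dif_pos hx, dif_pos hy, find_eq hiff hx hy]
  · have hy : ¬ ∃ s, s < j ∧ Ag (M j) y (B s) := by
      intro ⟨s, hs⟩; exact hx ⟨s, (hiff s).mpr hs⟩
    rw [dif_neg hx, dif_neg hy]

lemma sel_some {j s : ℕ} {x : ℕ → Bool} (h : sel M B j x = some s) :
    s < j ∧ Ag (M j) x (B s) ∧ ∀ s', s' < j → Ag (M j) x (B s') → s ≤ s' := by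
  unfold sel at h
  by_cases hx : ∃ s, s < j ∧ Ag (M j) x (B s)
  · rw [dif_pos hx] at h
    have := Nat.find_spec hx
    cases h
    exact ⟨this.1, this.2, fun s' h1 h2 => Nat.find_le ⟨h1, h2⟩⟩
  · rw [dif_neg hx] at h; cases h

lemma sel_isSome {j s : ℕ} {x : ℕ → Bool} (hs : s < j) (hx : Ag (M j) x (B s)) :
    ∃ s', sel M B j x = some s' := by
  unfold sel
  rw [dif_pos ⟨s, hs, hx⟩]
  exact ⟨_, rfl⟩

lemma phi_none {j : ℕ} {x : ℕ → Bool} (h : sel M B j x = none) :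
    Phi M A B j x = x := by
  unfold Phi; rw [h]; rfl

lemma phi_some {j s n : ℕ} {x : ℕ → Bool} (h : sel M B j x = some s) :
    Phi M A B j x n = if M j ≤ n ∧ n < M (j+1) then
        (if BlkEq M j x (A s) then B s n
         else if BlkEq M j x (B s) then A s n
         else x n)
      else x n := by
  unfold Phi; rw [h]; rfl

lemma phi_in {j s n : ℕ} {x : ℕ → Bool} (h : sel M B j x = some s)
    (h1 : M j ≤ n) (h2 : n < M (j+1)) :
    Phi M A B j x n =
      (if BlkEq M j x (A s) then B s n
       else if BlkEq M j x (B s) then A s n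
       else x n) := by
  rw [phi_some h, if_pos ⟨h1, h2⟩]

lemma phi_out {j n : ℕ} {x : ℕ → Bool} (h : ¬(M j ≤ n ∧ n < M (j+1))) :
    Phi M A B j x n = x n := by
  cases hs : sel M B j x with
  | none => rw [phi_none hs]
  | some s => rw [phi_some hs, if_neg h]

lemma phi_lo {j n : ℕ} {x : ℕ → Bool} (h : n < M j) : Phi M A B j x n = x n :=
  phi_out (by intro ⟨h1, _⟩; exact absurd h (not_lt.mpr h1))

lemma phi_hi {j n : ℕ} {x : ℕ → Bool} (h : M (j+1) ≤ n) : Phi M A B j x n = x n :=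
  phi_out (by intro ⟨_, h2⟩; exact absurd h (not_le.mpr h2))

lemma phi_pre {j : ℕ} {x : ℕ → Bool} : Ag (M j) (Phi M A B j x) x :=
  fun _ hm => phi_lo hm

lemma phi_invol {j : ℕ} {x : ℕ → Bool} : Phi M A B j (Phi M A B j x) = x := by
  funext n
  cases hs : sel M B j x with
  | none => rw [phi_none hs, phi_none hs]
  | some s =>
    have hss : sel M B j (Phi M A B j x) = some s :=
      (sel_congr (phi_pre (A := A))).trans hs
    by_cases hn : M j ≤ n ∧ n < M (j+1)
    · set y := Phi M A B j x with hy
      have hyn : ∀ m, M j ≤ m → m < M (j+1) → y m =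
          (if BlkEq M j x (A s) then B s m
           else if BlkEq M j x (B s) then A s m else x m) :=
        fun m h1 h2 => phi_in hs h1 h2
      by_cases t1 : BlkEq M j x (A s)
      · have hyB : BlkEq M j y (B s) := fun m h1 h2 => by
          rw [hyn m h1 h2, if_pos t1]
        by_cases t1' : BlkEq M j y (A s)
        · rw [phi_in hss hn.1 hn.2, if_pos t1']
          have hAB : A s n = B s n := (t1' n hn.1 hn.2).symm.trans (hyB n hn.1 hn.2)
          rw [← hAB]
          exact (t1 n hn.1 hn.2).symm
        · rw [phi_in hss hn.1 hn.2, if_neg t1', if_pos hyB]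
          exact (t1 n hn.1 hn.2).symm
      · by_cases t2 : BlkEq M j x (B s)
        · have hyA : BlkEq M j y (A s) := fun m h1 h2 => by
            rw [hyn m h1 h2, if_neg t1, if_pos t2]
          rw [phi_in hss hn.1 hn.2, if_pos hyA]
          exact (t2 n hn.1 hn.2).symm
        · have hyx : ∀ m, M j ≤ m → m < M (j+1) → y m = x m := fun m h1 h2 => by
            rw [hyn m h1 h2, if_neg t1, if_neg t2]
          have t1' : ¬ BlkEq M j y (A s) := fun hc =>
            t1 (fun m h1 h2 => (hyx m h1 h2).symm.trans (hc m h1 h2))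
          have t2' : ¬ BlkEq M j y (B s) := fun hc =>
            t2 (fun m h1 h2 => (hyx m h1 h2).symm.trans (hc m h1 h2))
          rw [phi_in hss hn.1 hn.2, if_neg t1', if_neg t2']
          exact hyx n hn.1 hn.2
    · rw [phi_out hn, phi_out hn]

lemma phi_agree (hM : StrictMono M) {c j : ℕ} {x y : ℕ → Bool}
    (hc : M (j+1) ≤ c) (hxy : Ag c x y) : Ag c (Phi M A B j x) (Phi M A B j y) := by
  have hMj : M j ≤ c := le_trans (hM.monotone (Nat.le_succ j)) hc
  have hsel : sel M B j x = sel M B j y := sel_congr (hxy.mono hMj)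
  intro n hn
  cases hs : sel M B j x with
  | none => rw [phi_none hs, phi_none (hsel ▸ hs)]; exact hxy n hn
  | some s =>
    have hs' : sel M B j y = some s := hsel ▸ hs
    by_cases hb : M j ≤ n ∧ n < M (j+1)
    · have hint : ∀ m, M j ≤ m → m < M (j+1) → x m = y m :=
        fun m _ h2 => hxy m (lt_of_lt_of_le h2 hc)
      have e1 : BlkEq M j x (A s) ↔ BlkEq M j y (A s) :=
        ⟨fun h m h1 h2 => (hint m h1 h2).symm.trans (h m h1 h2),
         fun h m h1 h2 => (hint m h1 h2).trans (h m h1 h2)⟩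
      have e2 : BlkEq M j x (B s) ↔ BlkEq M j y (B s) :=
        ⟨fun h m h1 h2 => (hint m h1 h2).symm.trans (h m h1 h2),
         fun h m h1 h2 => (hint m h1 h2).trans (h m h1 h2)⟩
      rw [phi_in hs hb.1 hb.2, phi_in hs' hb.1 hb.2]
      by_cases t1 : BlkEq M j x (A s)
      · rw [if_pos t1, if_pos (e1.mp t1)]
      · rw [if_neg t1, if_neg (fun hc' => t1 (e1.mpr hc'))]
        by_cases t2 : BlkEq M j x (B s)
        · rw [if_pos t2, if_pos (e2.mp t2)]
        · rw [if_neg t2, if_neg (fun hc' => t2 (e2.mpr hc'))]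
          exact hxy n hn
    · rw [phi_out hb, phi_out hb]; exact hxy n hn

lemma phi_diff (hM : StrictMono M) {XS : Set ℕ}
    (hI2 : ∀ s n, M (s+1) ≤ n → A s n ≠ B s n → n ∈ XS) {j n : ℕ} {x : ℕ → Bool}
    (h : Phi M A B j x n ≠ x n) : n ∈ XS := by
  cases hs : sel M B j x with
  | none => rw [phi_none hs] at h; exact absurd rfl h
  | some s =>
    obtain ⟨hsj, -, -⟩ := sel_some hs
    by_cases hb : M j ≤ n ∧ n < M (j+1)
    · have hMs : M (s+1) ≤ n := le_trans (hM.monotone hsj) hb.1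
      rw [phi_in hs hb.1 hb.2] at h
      by_cases t1 : BlkEq M j x (A s)
      · rw [if_pos t1] at h
        exact hI2 s n hMs (fun hc => h (hc ▸ (t1 n hb.1 hb.2).symm))
      · rw [if_neg t1] at h
        by_cases t2 : BlkEq M j x (B s)
        · rw [if_pos t2] at h
          refine hI2 s n hMs (fun hc => h ?_)
          rw [hc]
          exact (t2 n hb.1 hb.2).symm
        · rw [if_neg t2] at h; exact absurd rfl h
    · rw [phi_out hb] at h; exact absurd rfl h

lemma g_hi (hM : StrictMono M) {j n : ℕ} {x : ℕ → Bool} (h : M (j+1) ≤ n) :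
    Gm M A B j x n = x n := by
  induction j with
  | zero => exact phi_hi h
  | succ j IH =>
    show Phi M A B (j+1) (Gm M A B j x) n = x n
    rw [phi_hi h]
    exact IH (le_trans (hM.monotone (by omega)) h)

lemma g_agree (hM : StrictMono M) {c j : ℕ} {x y : ℕ → Bool}
    (hc : M (j+1) ≤ c) (hxy : Ag c x y) : Ag c (Gm M A B j x) (Gm M A B j y) := by
  induction j with
  | zero => exact phi_agree hM hc hxy
  | succ j IH =>
    exact phi_agree hM hc (IH (le_trans (hM.monotone (by omega)) hc))

lemma t_agree (hM : StrictMono M) {c j : ℕ} {x y : ℕ → Bool}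
    (hc : M (j+1) ≤ c) (hxy : Ag c x y) : Ag c (Tm M A B j x) (Tm M A B j y) := by
  induction j generalizing x y with
  | zero => exact phi_agree hM hc hxy
  | succ j IH =>
    exact IH (le_trans (hM.monotone (by omega)) hc) (phi_agree hM hc hxy)

lemma g_stab (hM : StrictMono M) {j j' : ℕ} (hjj : j' ≤ j) {x : ℕ → Bool} :
    ∀ n, n < M (j'+1) → Gm M A B j x n = Gm M A B j' x n := by
  induction j with
  | zero => intro n _; rw [Nat.le_zero.mp hjj]
  | succ j IH =>
    intro n hn
    rcases Nat.lt_succ_iff_lt_or_eq.mp (Nat.lt_succ_of_le hjj) with h | h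
    · have hj' : j' ≤ j := Nat.lt_succ_iff.mp (by omega)
      show Phi M A B (j+1) (Gm M A B j x) n = _
      rw [phi_lo (lt_of_lt_of_le hn (hM.monotone (by omega)))]
      exact IH hj' n hn
    · rw [h]
  
lemma t_stab (hM : StrictMono M) {j j' : ℕ} (hjj : j' ≤ j) {x : ℕ → Bool} :
    ∀ n, n < M (j'+1) → Tm M A B j x n = Tm M A B j' x n := by
  induction j with
  | zero => intro n _; rw [Nat.le_zero.mp hjj]
  | succ j IH =>
    intro n hn
    rcases Nat.lt_succ_iff_lt_or_eq.mp (Nat.lt_succ_of_le hjj) with h | h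
    · have hj' : j' ≤ j := Nat.lt_succ_iff.mp (by omega)
      show Tm M A B j (Phi M A B (j+1) x) n = _
      have hAg : Ag (M (j+1)) (Phi M A B (j+1) x) x := phi_pre
      have hle : M (j'+1) ≤ M (j+1) := hM.monotone (by omega)
      rw [t_agree (A := A) (B := B) hM (le_refl (M (j+1))) hAg n (lt_of_lt_of_le hn hle)]
      exact IH hj' n hn
    · rw [h]

lemma t_g {j : ℕ} {x : ℕ → Bool} : Tm M A B j (Gm M A B j x) = x := by
  induction j generalizing x with
  | zero => exact phi_invol
  | succ j IH =>
    show Tm M A B j (Phi M A B (j+1) (Phi M A B (j+1) (Gm M A B j x))) = x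
    rw [phi_invol]
    exact IH

lemma g_t {j : ℕ} {x : ℕ → Bool} : Gm M A B j (Tm M A B j x) = x := by
  induction j generalizing x with
  | zero => exact phi_invol
  | succ j IH =>
    show Phi M A B (j+1) (Gm M A B j (Tm M A B j (Phi M A B (j+1) x))) = x
    rw [IH, phi_invol]

lemma hh_eq (hM : StrictMono M) (hM0 : M 0 = 0) {j n : ℕ} {x : ℕ → Bool}
    (hn : n < M (j+1)) : hh M A B x n = Gm M A B j x n := by
  have hb : blk M n ≤ j := Nat.lt_succ_iff.mp (blk_lt_of_lt hM hM0 hn)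
  exact (g_stab hM hb n (lt_blk_succ hM n)).symm

lemma hhi_eq (hM : StrictMono M) (hM0 : M 0 = 0) {j n : ℕ} {x : ℕ → Bool}
    (hn : n < M (j+1)) : hhi M A B x n = Tm M A B j x n := by
  have hb : blk M n ≤ j := Nat.lt_succ_iff.mp (blk_lt_of_lt hM hM0 hn)
  exact (t_stab hM hb n (lt_blk_succ hM n)).symm

lemma inv_left (hM : StrictMono M) (hM0 : M 0 = 0) {x : ℕ → Bool} :
    hhi M A B (hh M A B x) = x := by
  funext n
  have h1 : Ag (M (blk M n + 1)) (hh M A B x) (Gm M A B (blk M n) x) :=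
    fun m hm => hh_eq hM hM0 hm
  show Tm M A B (blk M n) (hh M A B x) n = x n
  rw [t_agree hM (le_refl _) h1 n (lt_blk_succ hM n), t_g]

lemma inv_right (hM : StrictMono M) (hM0 : M 0 = 0) {y : ℕ → Bool} :
    hh M A B (hhi M A B y) = y := by
  funext n
  have h1 : Ag (M (blk M n + 1)) (hhi M A B y) (Tm M A B (blk M n) y) :=
    fun m hm => hhi_eq hM hM0 hm
  show Gm M A B (blk M n) (hhi M A B y) n = y n
  rw [g_agree hM (le_refl _) h1 n (lt_blk_succ hM n), g_t]

lemma g_diff (hM : StrictMono M) {XS : Set ℕ}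
    (hI2 : ∀ s n, M (s+1) ≤ n → A s n ≠ B s n → n ∈ XS) {j n : ℕ} {x : ℕ → Bool}
    (h : Gm M A B j x n ≠ x n) : n ∈ XS := by
  induction j with
  | zero => exact phi_diff hM hI2 h
  | succ j IH =>
    by_cases h2 : Gm M A B j x n = x n
    · have : Phi M A B (j+1) (Gm M A B j x) n ≠ Gm M A B j x n := by
        intro hc; exact h (hc.trans h2)
      exact phi_diff hM hI2 this
    · exact IH h2

lemma t_diff (hM : StrictMono M) {XS : Set ℕ}
    (hI2 : ∀ s n, M (s+1) ≤ n → A s n ≠ B s n → n ∈ XS) {j n : ℕ} {x : ℕ → Bool}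
    (h : Tm M A B j x n ≠ x n) : n ∈ XS := by
  induction j generalizing x with
  | zero => exact phi_diff hM hI2 h
  | succ j IH =>
    by_cases h2 : Phi M A B (j+1) x n = x n
    · have : Tm M A B j (Phi M A B (j+1) x) n ≠ Phi M A B (j+1) x n := by
        intro hc; exact h (hc.trans h2)
      exact IH this
    · exact phi_diff hM hI2 h2

lemma hh_diff (hM : StrictMono M) (hM0 : M 0 = 0) {XS : Set ℕ}
    (hI2 : ∀ s n, M (s+1) ≤ n → A s n ≠ B s n → n ∈ XS) {n : ℕ} {x : ℕ → Bool}
    (h : hh M A B x n ≠ x n) : n ∈ XS :=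
  g_diff hM hI2 h

lemma hhi_diff (hM : StrictMono M) (hM0 : M 0 = 0) {XS : Set ℕ}
    (hI2 : ∀ s n, M (s+1) ≤ n → A s n ≠ B s n → n ∈ XS) {n : ℕ} {x : ℕ → Bool}
    (h : hhi M A B x n ≠ x n) : n ∈ XS :=
  t_diff hM hI2 h

lemma pre_inj (hM : StrictMono M) (hM0 : M 0 = 0) {t : ℕ} {x y : ℕ → Bool}
    (hAg : Ag (M t) (hh M A B x) (hh M A B y)) : Ag (M t) x y := by
  intro n hn
  have hjt : blk M n + 1 ≤ t := blk_lt_of_lt hM hM0 hn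
  have h1 : Ag (M (blk M n + 1)) (hh M A B x) (hh M A B y) := hAg.mono (hM.monotone hjt)
  have e1 : x n = Tm M A B (blk M n) (hh M A B x) n :=
    congrFun (inv_left (A := A) (B := B) hM hM0 (x := x)).symm n
  have e2 : y n = Tm M A B (blk M n) (hh M A B y) n :=
    congrFun (inv_left (A := A) (B := B) hM hM0 (x := y)).symm n
  rw [e1, e2]
  exact t_agree hM (le_refl _) h1 n (lt_blk_succ hM n)

lemma h6 (hM : StrictMono M) (hM0 : M 0 = 0) {T s : ℕ} (hsT : s < T)
    (hI3b : ∀ s' s'', s'' < s' → s' < T → ∃ m, m < M (s'+1) ∧ B s' m ≠ B s'' m)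
    (hI4 : ∀ n, n < M (s+1) → B s n = Gm M A B (blk M n) (A s) n) :
    ∀ n, blk M n ≤ T → hh M A B (A s) n = B s n := by
  intro n
  induction n using Nat.strong_induction_on with
  | _ n IH =>
    intro hbT
    by_cases hn : n < M (s+1)
    · exact (hI4 n hn).symm
    · push_neg at hn
      set j := blk M n with hjdef
      have hsj : s + 1 ≤ j := le_blk hM hn
      obtain ⟨jj, hjj⟩ : ∃ jj, j = jj + 1 := ⟨j - 1, by omega⟩
      have hpre : Ag (M j) (Gm M A B jj (A s)) (B s) := by
        intro m hm
        have hm' : m < M (jj+1) := by rw [← hjj]; exact hm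
        have hbm : blk M m ≤ jj := Nat.lt_succ_iff.mp (blk_lt_of_lt hM hM0 hm')
        have h1 : Gm M A B jj (A s) m = Gm M A B (blk M m) (A s) m :=
          g_stab hM hbm m (lt_blk_succ hM m)
        have hmn : m < n := lt_of_lt_of_le hm (blk_le hM0 n)
        have h2 : hh M A B (A s) m = B s m :=
          IH m hmn (le_trans (blk_mono (le_of_lt hmn)) hbT)
        rw [h1]; exact h2
      have hsltj : s < j := by omega
      obtain ⟨s₀, hs₀⟩ := sel_isSome hsltj hpre
      obtain ⟨hs₀j, hag₀, -⟩ := sel_some hs₀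
      have hjT : j ≤ T := hbT
      have hs₀s : s₀ = s := by
        by_contra hne
        rcases Nat.lt_or_ge s₀ s with hlt | hge
        · obtain ⟨m, hm1, hm2⟩ := hI3b s s₀ hlt hsT
          have hmj : m < M j := lt_of_lt_of_le hm1 (hM.monotone hsj)
          exact hm2 ((hpre m hmj).symm.trans (hag₀ m hmj))
        · have hlt : s < s₀ := lt_of_le_of_ne hge (fun hc => hne hc.symm)
          obtain ⟨m, hm1, hm2⟩ := hI3b s₀ s hlt (lt_of_lt_of_le hs₀j hjT)
          have hmj : m < M j := lt_of_lt_of_le hm1 (hM.monotone hs₀j)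
          exact hm2 ((hag₀ m hmj).symm.trans (hpre m hmj))
      rw [hs₀s] at hs₀
      have hblkA : BlkEq M j (Gm M A B jj (A s)) (A s) := by
        intro m h1 h2
        rw [hjj] at h1
        exact g_hi hM h1
      have hnb1 : M j ≤ n := blk_le hM0 n
      have hnb2 : n < M (j+1) := lt_blk_succ hM n
      show Gm M A B j (A s) n = B s n
      have : Gm M A B j (A s) n = Phi M A B j (Gm M A B jj (A s)) n := by
        rw [hjj]; rfl
      rw [this, phi_in hs₀ hnb1 hnb2, if_pos hblkA]

lemma hh_cont (hM : StrictMono M) (hM0 : M 0 = 0) : Continuous (hh M A B) := by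
  apply continuous_pi
  intro n
  set j := blk M n with hj
  set c := M (j+1) with hc
  let ext : (Fin c → Bool) → (ℕ → Bool) := fun v m => if h : m < c then v ⟨m, h⟩ else false
  have key : (fun x => hh M A B x n) =
      (fun v => Gm M A B j (ext v) n) ∘ (fun (x : ℕ → Bool) (i : Fin c) => x i) := by
    funext x
    have hAg : Ag c x (ext (fun i : Fin c => x i)) := by
      intro m hm
      simp only [ext, dif_pos hm]
    exact g_agree hM (le_refl c) hAg n (lt_blk_succ hM n)
  rw [key]
  exact (continuous_of_discreteTopology).comp (continuous_pi fun i => continuous_apply _)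

lemma hhi_cont (hM : StrictMono M) (hM0 : M 0 = 0) : Continuous (hhi M A B) := by
  apply continuous_pi
  intro n
  set j := blk M n with hj
  set c := M (j+1) with hc
  let ext : (Fin c → Bool) → (ℕ → Bool) := fun v m => if h : m < c then v ⟨m, h⟩ else false
  have key : (fun x => hhi M A B x n) =
      (fun v => Tm M A B j (ext v) n) ∘ (fun (x : ℕ → Bool) (i : Fin c) => x i) := by
    funext x
    have hAg : Ag c x (ext (fun i : Fin c => x i)) := by
      intro m hm
      simp only [ext, dif_pos hm]
    exact t_agree hM (le_refl c) hAg n (lt_blk_succ hM n)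
  rw [key]
  exact (continuous_of_discreteTopology).comp (continuous_pi fun i => continuous_apply _)

variable {M' : ℕ → ℕ} {A' B' : ℕ → ℕ → Bool}

lemma phi_congr {j : ℕ} {x : ℕ → Bool}
    (hMe : ∀ i, i ≤ j+1 → M i = M' i)
    (hAe : ∀ s, s < j → A s = A' s) (hBe : ∀ s, s < j → B s = B' s) :
    Phi M A B j x = Phi M' A' B' j x := by
  have hMj : M j = M' j := hMe j (by omega)
  have hMj1 : M (j+1) = M' (j+1) := hMe (j+1) le_rfl
  have hiff : ∀ s, (s < j ∧ Ag (M j) x (B s)) ↔ (s < j ∧ Ag (M' j) x (B' s)) := by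
    intro s
    constructor
    · rintro ⟨h1, h2⟩; refine ⟨h1, ?_⟩; rw [← hMj, ← hBe s h1]; exact h2
    · rintro ⟨h1, h2⟩; refine ⟨h1, ?_⟩; rw [hMj, hBe s h1]; exact h2
  have hsel : sel M B j x = sel M' B' j x := by
    unfold sel
    by_cases hx : ∃ s, s < j ∧ Ag (M j) x (B s)
    · have hy : ∃ s, s < j ∧ Ag (M' j) x (B' s) := by
        obtain ⟨s, hs⟩ := hx; exact ⟨s, (hiff s).mp hs⟩
      rw [dif_pos hx, dif_pos hy, find_eq hiff hx hy]
    · have hy : ¬ ∃ s, s < j ∧ Ag (M' j) x (B' s) := by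
        intro ⟨s, hs⟩; exact hx ⟨s, (hiff s).mpr hs⟩
      rw [dif_neg hx, dif_neg hy]
  funext n
  cases hs : sel M B j x with
  | none => rw [phi_none hs, phi_none (hsel ▸ hs)]
  | some s =>
    have hs' : sel M' B' j x = some s := hsel ▸ hs
    obtain ⟨hsj, -, -⟩ := sel_some hs
    have hbeq : (M j ≤ n ∧ n < M (j+1)) ↔ (M' j ≤ n ∧ n < M' (j+1)) := by
      rw [hMj, hMj1]
    have hblkA : BlkEq M j x (A s) ↔ BlkEq M' j x (A' s) := by
      unfold BlkEq; rw [hMj, hMj1, hAe s hsj]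
    have hblkB : BlkEq M j x (B s) ↔ BlkEq M' j x (B' s) := by
      unfold BlkEq; rw [hMj, hMj1, hBe s hsj]
    by_cases hb : M j ≤ n ∧ n < M (j+1)
    · rw [phi_in hs hb.1 hb.2, phi_in hs' (hbeq.mp hb).1 (hbeq.mp hb).2]
      by_cases t1 : BlkEq M j x (A s)
      · rw [if_pos t1, if_pos (hblkA.mp t1), hBe s hsj]
      · rw [if_neg t1, if_neg (fun hc => t1 (hblkA.mpr hc))]
        by_cases t2 : BlkEq M j x (B s)
        · rw [if_pos t2, if_pos (hblkB.mp t2), hAe s hsj]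
        · rw [if_neg t2, if_neg (fun hc => t2 (hblkB.mpr hc))]
    · rw [phi_out hb, phi_out (fun hc => hb (hbeq.mpr hc))]

lemma gm_congr {j : ℕ}
    (hMe : ∀ i, i ≤ j+1 → M i = M' i)
    (hAe : ∀ s, s < j → A s = A' s) (hBe : ∀ s, s < j → B s = B' s) :
    ∀ x, Gm M A B j x = Gm M' A' B' j x := by
  induction j with
  | zero => intro x; exact phi_congr hMe hAe hBe
  | succ j IH =>
    intro x
    show Phi M A B (j+1) (Gm M A B j x) = Phi M' A' B' (j+1) (Gm M' A' B' j x)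
    rw [IH (fun i hi => hMe i (by omega)) (fun s hs => hAe s (by omega))
      (fun s hs => hBe s (by omega))]
    exact phi_congr hMe (fun s hs => hAe s (by omega)) (fun s hs => hBe s (by omega))

lemma tm_congr {j : ℕ}
    (hMe : ∀ i, i ≤ j+1 → M i = M' i)
    (hAe : ∀ s, s < j → A s = A' s) (hBe : ∀ s, s < j → B s = B' s) :
    ∀ x, Tm M A B j x = Tm M' A' B' j x := by
  induction j with
  | zero => intro x; exact phi_congr hMe hAe hBe
  | succ j IH =>
    intro x
    show Tm M A B j (Phi M A B (j+1) x) = Tm M' A' B' j (Phi M' A' B' (j+1) x)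
    rw [phi_congr hMe (fun s hs => hAe s (by omega)) (fun s hs => hBe s (by omega))]
    exact IH (fun i hi => hMe i (by omega)) (fun s hs => hAe s (by omega))
      (fun s hs => hBe s (by omega)) _

lemma blk_congr (hM : StrictMono M) (hM0 : M 0 = 0) (hM' : StrictMono M')
    (hM0' : M' 0 = 0) {t n : ℕ} (hMe : ∀ i, i ≤ t → M i = M' i) (hn : n < M t) :
    blk M n = blk M' n := by
  have hjt : blk M n < t := blk_lt_of_lt hM hM0 hn
  refine (blk_eq hM' hM0' ?_ ?_).symm
  · rw [← hMe _ (by omega)]; exact blk_le hM0 n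
  · rw [← hMe _ (by omega)]; exact lt_blk_succ hM n

end Mach

lemma isOpen_cyl (y : ℕ → Bool) (n : ℕ) :
    IsOpen {z : ℕ → Bool | ∀ i, i < n → z i = y i} := by
  have h : {z : ℕ → Bool | ∀ i, i < n → z i = y i}
      = ⋂ i ∈ Finset.range n, {z : ℕ → Bool | z i = y i} := by
    ext z; simp [Finset.mem_range]
  rw [h]
  refine isOpen_biInter_finset fun i _ => ?_
  have : {z : ℕ → Bool | z i = y i} = (fun z : ℕ → Bool => z i) ⁻¹' {y i} := rfl
  rw [this]
  exact (isOpen_discrete {y i}).preimage (continuous_apply i)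

lemma dense_approx {D : Set (ℕ → Bool)} {y : ℕ → Bool} (h : y ∈ closure D) (n : ℕ) :
    ∃ e ∈ D, ∀ i, i < n → e i = y i := by
  obtain ⟨e, he1, he2⟩ := mem_closure_iff.mp h _ (isOpen_cyl y n) (fun i _ => rfl)
  exact ⟨e, he2, he1⟩

lemma isNowhereDense_isMeagre {s : Set (ℕ → Bool)} (h : IsNowhereDense s) :
    IsMeagre s :=
  isMeagre_iff_countable_union_isNowhereDense.mpr
    ⟨{s}, by simpa using h, countable_singleton s, by simp⟩

lemma singleton_nwd (a : ℕ → Bool) : IsNowhereDense {a} := by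
  refine (isClosed_singleton).isNowhereDense_iff.mpr ?_
  rw [eq_empty_iff_forall_notMem]
  intro x hx
  obtain ⟨U, hUsub, hUo, hxU⟩ := mem_interior.mp hx
  obtain ⟨Fs, u, hu, hsub⟩ := (isOpen_pi_iff.mp hUo) x hxU
  set m := Fs.sup id + 1 with hm
  set y : ℕ → Bool := Function.update x m (!(x m)) with hy
  have hyU : y ∈ U := by
    apply hsub
    intro i hi
    have him : i ≠ m := by
      have : i ≤ Fs.sup id := Finset.le_sup (f := id) hi
      omega
    have : y i = x i := Function.update_of_ne him _ _
    rw [this]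
    exact (hu i hi).2
  have h1 : y = a := hUsub hyU
  have h2 : x = a := hUsub hxU
  have : y m = x m := by rw [h1, h2]
  rw [hy, Function.update_self] at this
  simp at this

lemma countable_isMeagre {S : Set (ℕ → Bool)} (h : S.Countable) : IsMeagre S := by
  rcases S.eq_empty_or_nonempty with rfl | hne
  · exact IsMeagre.empty
  · obtain ⟨f, hf⟩ := h.exists_eq_range hne
    have : S = ⋃ n, {f n} := by rw [hf]; ext z; simp [eq_comm]
    rw [this]
    exact isMeagre_iUnion fun n => isNowhereDense_isMeagre (singleton_nwd _)

variable {I : Set (Set ℕ)}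

lemma not_subset_countable (hNM : NonMeagerFamily I) {D' S : Set (ℕ → Bool)}
    (hdense : cantorCopy I ⊆ closure D') (hS : S.Countable) (hScl : IsClosed S) :
    ¬ (D' ⊆ S) := by
  intro h
  have h2 : cantorCopy I ⊆ S := by
    intro x hx
    have := closure_mono h (hdense hx)
    rwa [hScl.closure_eq] at this
  exact hNM ((countable_isMeagre hS).mono h2)

lemma nonmeager_blocks (hNM : NonMeagerFamily I) {f : ℕ → ℕ} (hf : StrictMono f) :
    ∃ Z ∈ I, ∀ K, ∃ k, K ≤ k ∧ ∀ j, f k ≤ j → j < f (k+1) → j ∈ Z := by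
  by_contra hcon
  push_neg at hcon
  set C : ℕ → Set (ℕ → Bool) :=
    fun K => {x | ∀ k, K ≤ k → ∃ j, f k ≤ j ∧ j < f (k+1) ∧ x j = false} with hC
  have hcov : cantorCopy I ⊆ ⋃ K, C K := by
    intro x hx
    obtain ⟨K, hK⟩ := hcon (toSet x) hx
    refine mem_iUnion.mpr ⟨K, ?_⟩
    intro k hk
    obtain ⟨j, h1, h2, h3⟩ := hK k hk
    refine ⟨j, h1, h2, ?_⟩
    revert h3
    simp [toSet]
  have hmeag : ∀ K, IsMeagre (C K) := by
    intro K
    have hclosed : IsClosed (C K) := by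
      have h : C K = ⋂ k ∈ {k : ℕ | K ≤ k},
          ⋃ j ∈ Finset.Ico (f k) (f (k+1)), {x : ℕ → Bool | x j = false} := by
        ext x
        simp only [hC, mem_setOf_eq, mem_iInter, mem_iUnion, Finset.mem_Ico]
        constructor
        · intro hx k hk
          obtain ⟨j, h1, h2, h3⟩ := hx k hk
          exact ⟨j, ⟨h1, h2⟩, h3⟩
        · intro hx k hk
          obtain ⟨j, ⟨h1, h2⟩, h3⟩ := hx k hk
          exact ⟨j, h1, h2, h3⟩
      rw [h]
      refine isClosed_biInter fun k _ => isClosed_biUnion_finset fun j _ => ?_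
      have : {x : ℕ → Bool | x j = false} = (fun x : ℕ → Bool => x j) ⁻¹' {false} := rfl
      rw [this]
      exact (isClosed_discrete {false}).preimage (continuous_apply j)
    have hnwd : IsNowhereDense (C K) := by
      refine hclosed.isNowhereDense_iff.mpr ?_
      rw [eq_empty_iff_forall_notMem]
      intro x hx
      obtain ⟨U, hUsub, hUo, hxU⟩ := mem_interior.mp hx
      obtain ⟨Fs, u, hu, hsub⟩ := (isOpen_pi_iff.mp hUo) x hxU
      set m := Fs.sup id with hm
      set k := max K (m+1) with hk
      set y : ℕ → Bool := fun j => if f k ≤ j ∧ j < f (k+1) then true else x j with hy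
      have hyU : y ∈ U := by
        apply hsub
        intro i hi
        have him : i ≤ m := Finset.le_sup (f := id) hi
        have hik : i < f k := by
          have h1 : m + 1 ≤ k := le_max_right _ _
          have h2 : k ≤ f k := hf.le_apply
          omega
        have : y i = x i := if_neg (by rintro ⟨h1, _⟩; omega)
        rw [this]
        exact (hu i hi).2
      have hyC : y ∈ C K := hUsub hyU
      obtain ⟨j, h1, h2, h3⟩ := hyC k (le_max_left _ _)
      rw [hy] at h3
      simp only [if_pos (And.intro h1 h2)] at h3
      cases h3
    exact isNowhereDense_isMeagre hnwd
  exact hNM ((isMeagre_iUnion hmeag).mono hcov)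

-- density machinery

/-- auxiliary recursion for interval partitions -/
noncomputable def seqq (apx : ℕ → (ℕ → Bool)) (start : ℕ) (bnd : (ℕ → Bool) → ℕ) :
    ℕ → ℕ
  | 0 => start
  | (k+1) => max (seqq apx start bnd k) (bnd (apx (seqq apx start bnd k))) + 1

lemma seqq_strictMono (apx : ℕ → (ℕ → Bool)) (start : ℕ) (bnd : (ℕ → Bool) → ℕ) :
    StrictMono (seqq apx start bnd) := by
  apply strictMono_nat_of_lt_succ
  intro k
  show _ < max _ _ + 1
  omega

variable {I : Set (Set ℕ)}

open Classical in
/-- the garbage-bound function -/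
noncomputable def bndOf (X₀ : Set ℕ) (e : ℕ → Bool) : ℕ :=
  if h : {n | e n = true ∧ n ∉ X₀}.Finite then h.toFinset.sup id + 1 else 0

lemma bndOf_spec {X₀ : Set ℕ} {e : ℕ → Bool} (h : {n | e n = true ∧ n ∉ X₀}.Finite)
    {i : ℕ} (hi : e i = true) (hiX : i ∉ X₀) : i < bndOf X₀ e := by
  unfold bndOf
  split
  next h' =>
    have hmem : i ∈ h'.toFinset := by rw [Set.Finite.mem_toFinset]; exact ⟨hi, hiX⟩
    have hle : i ≤ h'.toFinset.sup id := Finset.le_sup (f := id) hmem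
    omega
  next h' => exact absurd h h' 

lemma key_density (hI : IsIdealOn I) (hfin : ContainsFinites I) (hP : IsPIdealOn I)
    (hNM : NonMeagerFamily I) (cD : Bool → Set (ℕ → Bool))
    (hsub : ∀ b, cD b ⊆ cantorCopy I) (hdense : ∀ b, cantorCopy I ⊆ closure (cD b))
    (hcnt : ∀ b, (cD b).Countable) (hne : ∀ b, (cD b).Nonempty) :
    ∃ XS ∈ I, (∀ b, ∀ x ∈ cD b, {n | x n = true ∧ n ∉ XS}.Finite) ∧
      ∀ (b : Bool) (p : Finset ℕ) (M' : ℕ), ∃ n e, M' ≤ n ∧ (∀ i ∈ p, i < n) ∧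
        e ∈ cD b ∧ (∀ i, i < n → e i = decide (i ∈ p)) ∧
        (∀ i, n ≤ i → e i = true → i ∈ XS) := by
  classical
  -- enumerate the union and find a pseudo-union X₀
  have hUc : (cD false ∪ cD true).Countable := (hcnt false).union (hcnt true)
  have hUne : (cD false ∪ cD true).Nonempty := (hne false).mono subset_union_left
  obtain ⟨w, hw⟩ := hUc.exists_eq_range hUne
  have hwI : ∀ n, toSet (w n) ∈ I := by
    intro n
    have hm : w n ∈ cD false ∪ cD true := by rw [hw]; exact mem_range_self n
    rcases hm with h | h
    · exact hsub false h
    · exact hsub true h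
  obtain ⟨X₀, hX₀I, hX₀⟩ := hP (fun n => toSet (w n)) hwI
  have hcov0 : ∀ b, ∀ x ∈ cD b, {n | x n = true ∧ n ∉ X₀}.Finite := by
    intro b x hx
    have hx' : x ∈ cD false ∪ cD true := by
      cases b
      · exact Or.inl hx
      · exact Or.inr hx
    rw [hw] at hx'
    obtain ⟨n, rfl⟩ := hx'
    have : {m | w n m = true ∧ m ∉ X₀} = toSet (w n) \ X₀ := by
      ext m; simp [toSet, Set.mem_diff]
    rw [this]
    exact hX₀ n
  -- per index (b, p): an interval partition with controlled garbage
  have approx : ∀ (b : Bool) (p : Finset ℕ) (n : ℕ),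
      ∃ e ∈ cD b, ∀ i, i < n → e i = decide (i ∈ p) := by
    intro b p n
    have hpI : toSet (fun i => decide (i ∈ p)) ∈ I := by
      have : toSet (fun i => decide (i ∈ p)) = ↑p := by
        ext i; simp [toSet]
      rw [this]
      exact hfin _ (p.finite_toSet)
    have hclos : (fun i => decide (i ∈ p)) ∈ closure (cD b) := hdense b hpI
    obtain ⟨e, he, hagr⟩ := dense_approx hclos n
    exact ⟨e, he, hagr⟩
  set apx : Bool → Finset ℕ → ℕ → (ℕ → Bool) :=
    fun b p n => (approx b p n).choose with hapx
  have apx_mem : ∀ b p n, apx b p n ∈ cD b := fun b p n => (approx b p n).choose_spec.1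
  have apx_agr : ∀ b p n, ∀ i, i < n → apx b p n i = decide (i ∈ p) :=
    fun b p n => (approx b p n).choose_spec.2
  set sq : Bool → Finset ℕ → ℕ → ℕ :=
    fun b p => seqq (apx b p) (p.sup id + 1) (bndOf X₀) with hsq
  have sqmono : ∀ b p, StrictMono (sq b p) := fun b p => seqq_strictMono _ _ _
  -- non-meagerness gives a member of I containing many blocks, for each index
  have hZex : ∀ (b : Bool) (p : Finset ℕ), ∃ Z ∈ I, ∀ K, ∃ k, K ≤ k ∧
      ∀ j, sq b p k ≤ j → j < sq b p (k+1) → j ∈ Z :=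
    fun b p => nonmeager_blocks hNM (sqmono b p)
  set Z : Bool → Finset ℕ → Set ℕ := fun b p => (hZex b p).choose with hZ
  have hZI : ∀ b p, Z b p ∈ I := fun b p => (hZex b p).choose_spec.1
  have hZblocks : ∀ b p K, ∃ k, K ≤ k ∧
      ∀ j, sq b p k ≤ j → j < sq b p (k+1) → j ∈ Z b p :=
    fun b p => (hZex b p).choose_spec.2
  -- a single pseudo-union of all the Z's
  obtain ⟨gix, hgix⟩ := exists_surjective_nat (Bool × Finset ℕ)
  obtain ⟨W, hWI, hW⟩ := hP (fun n => Z (gix n).1 (gix n).2) (fun n => hZI _ _)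
  have hZW : ∀ b p, (Z b p \ W).Finite := by
    intro b p
    obtain ⟨n, hn⟩ := hgix (b, p)
    have h1 : (gix n).1 = b := by rw [hn]
    have h2 : (gix n).2 = p := by rw [hn]
    have := hW n
    rwa [h1, h2] at this
  refine ⟨X₀ ∪ W, hI.2.2.1 _ _ hX₀I hWI, ?_, ?_⟩
  · intro b x hx
    exact ((hcov0 b x hx).subset (fun n hn => ⟨hn.1, fun hc => hn.2 (Or.inl hc)⟩))
  · intro b p M'
    -- bound for Z \ W
    set BZ := (hZW b p).toFinset.sup id + 1 with hBZ
    have hBZ_spec : ∀ i ∈ Z b p \ W, i < BZ := by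
      intro i hi
      have hmem : i ∈ (hZW b p).toFinset := by rw [Set.Finite.mem_toFinset]; exact hi
      have hle : i ≤ (hZW b p).toFinset.sup id := Finset.le_sup (f := id) hmem
      omega
    set K := max M' BZ with hK
    obtain ⟨k, hkK, hkblk⟩ := hZblocks b p K
    set n := sq b p k with hn
    have hKn : K ≤ n := le_trans (sqmono b p).le_apply ((sqmono b p).monotone hkK)
    refine ⟨n, apx b p n, le_trans (le_max_left _ _) hKn, ?_, apx_mem b p n, apx_agr b p n, ?_⟩
    · intro i hip
      have h1 : i ≤ p.sup id := Finset.le_sup (f := id) hip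
      have h2 : p.sup id + 1 ≤ n := by
        have := (sqmono b p).monotone (Nat.zero_le k)
        exact this
      omega
    · intro i hi hitrue
      by_cases hiX : i ∈ X₀
      · exact Or.inl hiX
      · -- garbage of apx b p n is below sq b p (k+1)
        have hgar : i < sq b p (k+1) := by
          have hfin' : {m | apx b p n m = true ∧ m ∉ X₀}.Finite :=
            hcov0 b _ (apx_mem b p n)
          have := bndOf_spec hfin' hitrue hiX
          have hstep : sq b p (k+1) = max (sq b p k) (bndOf X₀ (apx b p (sq b p k))) + 1 := rfl
          rw [hstep, ← hn]
          omega
        have hiZ : i ∈ Z b p := hkblk i hi hgar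
        by_cases hiW : i ∈ W
        · exact Or.inr hiW
        · exfalso
          have := hBZ_spec i ⟨hiZ, hiW⟩
          have hBZK : BZ ≤ K := le_max_right _ _
          omega

-- ** The recursive construction **

structure Full where
  M : ℕ → ℕ
  A : ℕ → ℕ → Bool
  B : ℕ → ℕ → Bool

variable {I : Set (Set ℕ)}

/-- the invariants of a single matched pair -/
def Q (cD : Bool → Set (ℕ → Bool)) (XS : Set ℕ) (F : Full) (s : ℕ) : Prop :=
  F.A s ∈ cD false ∧ F.B s ∈ cD true ∧
  (∀ n, F.M (s+1) ≤ n → F.A s n ≠ F.B s n → n ∈ XS) ∧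
  (∀ s', s' < s → ∃ n, n < F.M (s+1) ∧ F.A s n ≠ F.A s' n) ∧
  (∀ s', s' < s → ∃ n, n < F.M (s+1) ∧ F.B s n ≠ F.B s' n) ∧
  (∀ n, n < F.M (s+1) → F.B s n = Gm F.M F.A F.B (blk F.M n) (F.A s) n)

/-- the invariants of a stage of the construction -/
def Inv (cD : Bool → Set (ℕ → Bool)) (XS : Set ℕ) (u v : ℕ → ℕ → Bool)
    (F : Full) (t : ℕ) : Prop :=
  F.M 0 = 0 ∧ StrictMono F.M ∧ (∀ s, s < t → Q cD XS F s) ∧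
  (∀ s, s < t → s % 2 = 0 → ∀ k, 2*k ≤ s → ∃ s', s' ≤ s ∧ F.A s' = u k) ∧
  (∀ s, s < t → s % 2 = 1 → ∀ k, 2*k+1 ≤ s → ∃ s', s' ≤ s ∧ F.B s' = v k)

lemma Q_transfer {cD : Bool → Set (ℕ → Bool)} {XS : Set ℕ} {F F' : Full}
    (hM : StrictMono F.M) (hM0 : F.M 0 = 0)
    (hM' : StrictMono F'.M) (hM0' : F'.M 0 = 0) {s : ℕ}
    (hMe : ∀ i, i ≤ s+1 → F.M i = F'.M i)
    (hAe : ∀ s', s' ≤ s → F.A s' = F'.A s')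
    (hBe : ∀ s', s' ≤ s → F.B s' = F'.B s')
    (hq : Q cD XS F s) : Q cD XS F' s := by
  obtain ⟨q1, q2, q3, q4, q5, q6⟩ := hq
  have hAs := hAe s le_rfl
  have hBs := hBe s le_rfl
  have hMs1 := hMe (s+1) le_rfl
  refine ⟨hAs ▸ q1, hBs ▸ q2, ?_, ?_, ?_, ?_⟩
  · intro n hn hne
    exact q3 n (hMs1 ▸ hn) (hAs ▸ hBs ▸ hne)
  · intro s' hs'
    obtain ⟨n, hn1, hn2⟩ := q4 s' hs'
    exact ⟨n, hMs1 ▸ hn1, (hAe s' (le_of_lt hs')) ▸ hAs ▸ hn2⟩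
  · intro s' hs'
    obtain ⟨n, hn1, hn2⟩ := q5 s' hs'
    exact ⟨n, hMs1 ▸ hn1, (hBe s' (le_of_lt hs')) ▸ hBs ▸ hn2⟩
  · intro n hn
    have hn' : n < F.M (s+1) := hMs1 ▸ hn
    have hblk : blk F.M n = blk F'.M n := blk_congr hM hM0 hM' hM0' hMe hn'
    have hj : blk F.M n ≤ s := Nat.lt_succ_iff.mp (blk_lt_of_lt hM hM0 hn')
    have hgm : Gm F.M F.A F.B (blk F.M n) (F.A s) n
        = Gm F'.M F'.A F'.B (blk F'.M n) (F'.A s) n := by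
      rw [← hblk, ← hAs]
      exact congrFun (gm_congr (fun i hi => hMe i (by omega))
        (fun s' hs' => hAe s' (by omega)) (fun s' hs' => hBe s' (by omega)) (F.A s)) n
    rw [← hBs, ← hgm]
    exact q6 n hn'

lemma stageH6 {cD : Bool → Set (ℕ → Bool)} {XS : Set ℕ} {F : Full} {t : ℕ}
    (hM : StrictMono F.M) (hM0 : F.M 0 = 0)
    (hQ : ∀ s, s < t → Q cD XS F s) :
    ∀ s, s < t → ∀ n, blk F.M n ≤ t → hh F.M F.A F.B (F.A s) n = F.B s n := by
  intro s hst n hbn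
  refine h6 hM hM0 hst ?_ ?_ n hbn
  · intro s' s'' hlt hs'
    exact (hQ s' hs').2.2.2.2.1 s'' hlt
  · exact (hQ s hst).2.2.2.2.2

/-- the boundary extension -/
def newM (F : Full) (t Mnext : ℕ) : ℕ → ℕ :=
  fun i => if i ≤ t then F.M i else Mnext + (i - (t+1))

lemma newM_eq {F : Full} {t Mnext : ℕ} {i : ℕ} (h : i ≤ t) : newM F t Mnext i = F.M i :=
  if_pos h

lemma newM_succ {F : Full} {t Mnext : ℕ} : newM F t Mnext (t+1) = Mnext := by
  unfold newM
  rw [if_neg (by omega)]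
  omega

lemma newM_mono {F : Full} {t Mnext : ℕ} (hM : StrictMono F.M)
    (h : F.M t < Mnext) : StrictMono (newM F t Mnext) := by
  have key : ∀ i, newM F t Mnext i < newM F t Mnext (i+1) := by
    intro i
    unfold newM
    rcases Nat.lt_or_ge i t with h1 | h1
    · rw [if_pos (by omega), if_pos (by omega)]
      exact hM (by omega)
    · rcases Nat.eq_or_lt_of_le h1 with rfl | h2
      · rw [if_pos le_rfl, if_neg (by omega)]
        omega
      · rw [if_neg (by omega), if_neg (by omega)]
        omega
  exact strictMono_nat_of_lt_succ key

lemma newM_zero {F : Full} {t Mnext : ℕ} (hM0 : F.M 0 = 0) : newM F t Mnext 0 = 0 := by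
  unfold newM
  rw [if_pos (Nat.zero_le t)]
  exact hM0

section Step

variable {cD : Bool → Set (ℕ → Bool)} {XS : Set ℕ} {u v : ℕ → ℕ → Bool}

lemma step_forward
    (hfresh : ∀ (b : Bool) (S : Set (ℕ → Bool)), S.Finite → ∃ x ∈ cD b, x ∉ S)
    (hcov : ∀ b, ∀ x ∈ cD b, {n | x n = true ∧ n ∉ XS}.Finite)
    (hdens : ∀ (b : Bool) (p : Finset ℕ) (M' : ℕ), ∃ n e, M' ≤ n ∧ (∀ i ∈ p, i < n) ∧
      e ∈ cD b ∧ (∀ i, i < n → e i = decide (i ∈ p)) ∧ (∀ i, n ≤ i → e i = true → i ∈ XS))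
    (hu : cD false = Set.range u) (hv : cD true = Set.range v)
    (t : ℕ) (ht : t % 2 = 0) (F : Full) (hF : Inv cD XS u v F t) :
    ∃ F' : Full, (∀ i, i ≤ t → F'.M i = F.M i) ∧ (∀ s, s < t → F'.A s = F.A s) ∧
      (∀ s, s < t → F'.B s = F.B s) ∧ Inv cD XS u v F' (t+1) := by
  classical
  obtain ⟨hM0, hM, hQ, hI6, hI7⟩ := hF
  set S : Set (ℕ → Bool) := F.A '' (Set.Iio t) with hS
  have hSfin : S.Finite := (Set.finite_Iio t).image _
  have hex : ∃ k, u k ∉ S := by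
    obtain ⟨x, hx1, hx2⟩ := hfresh false S hSfin
    rw [hu] at hx1
    obtain ⟨k, rfl⟩ := hx1
    exact ⟨k, hx2⟩
  set k₀ := Nat.find hex with hk₀
  set d := u k₀ with hd
  have hdD : d ∈ cD false := by rw [hu]; exact Set.mem_range_self _
  have hdS : d ∉ S := Nat.find_spec hex
  have hdne : ∀ s, s < t → d ≠ F.A s := by
    intro s hs hc
    exact hdS ⟨s, hs, hc.symm⟩
  set wit : ℕ → ℕ := fun s =>
    if h : d ≠ F.A s then Classical.choose (Function.ne_iff.mp h) else 0 with hwitdef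
  have hwit : ∀ s, s < t → d (wit s) ≠ F.A s (wit s) := by
    intro s hs
    have h := hdne s hs
    simp only [hwitdef, dif_pos h]
    exact Classical.choose_spec (Function.ne_iff.mp h)
  set Mnext := max (F.M t) (max (bndOf XS d) ((Finset.range t).sup wit)) + 1 with hMnext
  have hMn1 : F.M t < Mnext := by
    have := le_max_left (F.M t) (max (bndOf XS d) ((Finset.range t).sup wit))
    omega
  have hgar : ∀ i, d i = true → i ∉ XS → i < Mnext := by
    intro i h1 h2
    have h3 := bndOf_spec (hcov false d hdD) h1 h2
    have := le_max_left (bndOf XS d) ((Finset.range t).sup wit)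
    have := le_max_right (F.M t) (max (bndOf XS d) ((Finset.range t).sup wit))
    omega
  have hwitlt : ∀ s, s < t → wit s < Mnext := by
    intro s hs
    have h1 : wit s ≤ (Finset.range t).sup wit :=
      Finset.le_sup (Finset.mem_range.mpr hs)
    have := le_max_right (bndOf XS d) ((Finset.range t).sup wit)
    have := le_max_right (F.M t) (max (bndOf XS d) ((Finset.range t).sup wit))
    omega
  set M' := newM F t Mnext with hM'def
  have hM'm : StrictMono M' := newM_mono hM hMn1
  have hM'0 : M' 0 = 0 := newM_zero hM0
  have hM'succ : M' (t+1) = Mnext := newM_succ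
  have hMe : ∀ i, i ≤ t → F.M i = M' i := fun i hi => (newM_eq hi).symm
  set G : Full := ⟨M', F.A, F.B⟩ with hG
  have hQG : ∀ s, s < t → Q cD XS G s := fun s hs =>
    Q_transfer (F' := G) hM hM0 hM'm hM'0 (fun i hi => hMe i (by omega))
      (fun _ _ => rfl) (fun _ _ => rfl) (hQ s hs)
  set p : Finset ℕ :=
    (Finset.range Mnext).filter (fun n => Gm M' F.A F.B (blk M' n) d n = true) with hp
  obtain ⟨n₁, e, hn₁, hpn₁, heD, hagr, htail⟩ := hdens true p Mnext
  have hagr' : ∀ n, n < Mnext → e n = Gm M' F.A F.B (blk M' n) d n := by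
    intro n hn
    rw [hagr n (lt_of_lt_of_le hn hn₁)]
    by_cases hg : Gm M' F.A F.B (blk M' n) d n = true
    · rw [hg]
      have : n ∈ p := by
        rw [hp, Finset.mem_filter, Finset.mem_range]
        exact ⟨hn, hg⟩
      simp [this]
    · have hg' : Gm M' F.A F.B (blk M' n) d n = false := by
        revert hg; cases Gm M' F.A F.B (blk M' n) d n <;> simp
      rw [hg']
      have : n ∉ p := by
        rw [hp, Finset.mem_filter]
        rintro ⟨-, hc⟩
        exact hg hc
      simp [this]
  have hefresh : ∀ i, Mnext ≤ i → e i = true → i ∈ XS := by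
    intro i hi hei
    rcases Nat.lt_or_ge i n₁ with h1 | h1
    · exfalso
      have := hagr i h1
      rw [hei] at this
      have hip : i ∈ p := by
        have := of_decide_eq_true this.symm
        exact this
      rw [hp, Finset.mem_filter, Finset.mem_range] at hip
      omega
    · exact htail i h1 hei
  set F' : Full := ⟨M', Function.update F.A t d, Function.update F.B t e⟩ with hF'
  have hAold : ∀ s, s < t → F'.A s = F.A s := by
    intro s hs
    exact Function.update_of_ne (by omega) _ _
  have hBold : ∀ s, s < t → F'.B s = F.B s := by
    intro s hs
    exact Function.update_of_ne (by omega) _ _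
  have hAnew : F'.A t = d := Function.update_self _ _ _
  have hBnew : F'.B t = e := Function.update_self _ _ _
  have hMold : ∀ i, i ≤ t → F'.M i = F.M i := fun i hi => newM_eq hi
  have hQold : ∀ s, s < t → Q cD XS F' s := by
    intro s hs
    refine Q_transfer (F := G) (F' := F') hM'm hM'0 hM'm hM'0 (fun i hi => rfl)
      (fun s' hs' => (hAold s' (by omega)).symm) (fun s' hs' => (hBold s' (by omega)).symm)
      (hQG s hs)
  -- the new pair
  have hQt : Q cD XS F' t := by
    refine ⟨by rw [hAnew]; exact hdD, by rw [hBnew]; exact heD, ?_, ?_, ?_, ?_⟩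
    · -- I2
      intro n hn hne
      rw [hAnew, hBnew] at hne
      have hnM : Mnext ≤ n := by
        have : F'.M (t+1) = Mnext := hM'succ
        omega
      by_cases he : e n = true
      · exact hefresh n hnM he
      · have hdn : d n = true := by
          revert hne he
          cases d n <;> cases e n <;> simp
        by_contra hX
        have := hgar n hdn hX
        omega
    · -- I3a
      intro s hs
      refine ⟨wit s, ?_, ?_⟩
      · have h2 : F'.M (t+1) = Mnext := hM'succ
        have := hwitlt s hs
        omega
      · rw [hAnew, hAold s hs]; exact hwit s hs
    · -- I3b
      intro s hs
      by_contra hcon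
      push_neg at hcon
      have hcon' : ∀ n, n < Mnext → e n = F.B s n := by
        intro n hn
        have h1 := hcon n (by have h2 : F'.M (t+1) = Mnext := hM'succ; omega)
        rw [hBnew, hBold s hs] at h1
        exact not_not.mp (by simpa using h1)
      have hH6 := stageH6 (F := G) hM'm hM'0 hQG s hs
      have hAgh : Ag (M' (t+1)) (hh M' F.A F.B d) (hh M' F.A F.B (F.A s)) := by
        intro m hm
        have hm' : m < Mnext := by rw [← hM'succ]; exact hm
        have hblk : blk M' m ≤ t := Nat.lt_succ_iff.mp (blk_lt_of_lt hM'm hM'0 hm)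
        have h1 : hh M' F.A F.B d m = e m := (hagr' m hm').symm
        have h2 : hh M' F.A F.B (F.A s) m = F.B s m := hH6 m hblk
        rw [h1, h2]
        exact hcon' m hm'
      have hinj := pre_inj hM'm hM'0 hAgh
      exact hwit s hs (hinj (wit s) (by rw [hM'succ]; exact hwitlt s hs))
    · -- I4
      intro n hn
      have hn' : n < Mnext := by have h2 : F'.M (t+1) = Mnext := hM'succ; omega
      have hnM' : n < M' (t+1) := by rw [hM'succ]; exact hn'
      have hblk : blk M' n ≤ t := Nat.lt_succ_iff.mp (blk_lt_of_lt hM'm hM'0 hnM')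
      have hgm : Gm F'.M F'.A F'.B (blk M' n) (F'.A t) = Gm M' F.A F.B (blk M' n) d := by
        rw [hAnew]
        exact gm_congr (fun i _ => rfl)
          (fun s' hs' => hAold s' (by omega))
          (fun s' hs' => hBold s' (by omega)) d
      have hcalc : F'.B t n = Gm F'.M F'.A F'.B (blk M' n) (F'.A t) n := by
        rw [hBnew]
        rw [congrFun hgm n]
        exact hagr' n hn'
      exact hcalc
  refine ⟨F', hMold, hAold, hBold, hM'0, hM'm, ?_, ?_, ?_⟩
  · intro s hs
    rcases Nat.lt_or_ge s t with h | h
    · exact hQold s h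
    · have : s = t := by omega
      rw [this]
      exact hQt
  · -- I6
    intro s hs hpar k hk
    rcases Nat.lt_or_ge s t with h | h
    · obtain ⟨s', hs'1, hs'2⟩ := hI6 s h hpar k hk
      exact ⟨s', hs'1, by rw [hAold s' (by omega)]; exact hs'2⟩
    · have hst : s = t := by omega
      rw [hst] at hk ⊢
      by_cases hkS : u k ∈ S
      · obtain ⟨s', hs', heq⟩ := hkS
        simp only [Set.mem_Iio] at hs'
        exact ⟨s', by omega, by rw [hAold s' hs']; exact heq⟩
      · have hk₀k : k₀ ≤ k := by
          by_contra hlt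
          push_neg at hlt
          exact hkS (not_not.mp (fun hc => (Nat.find_min hex hlt) hc))
        have hkk₀ : k = k₀ := by
          by_contra hne
          have hlt : k₀ < k := by omega
          obtain ⟨s', hs'le, heq⟩ := hI6 (t-2) (by omega) (by omega) k₀ (by omega)
          exact hdS ⟨s', by simp only [Set.mem_Iio]; omega, heq⟩
        exact ⟨t, le_rfl, by rw [hAnew, hkk₀]⟩
  · -- I7
    intro s hs hpar k hk
    rcases Nat.lt_or_ge s t with h | h
    · obtain ⟨s', hs'1, hs'2⟩ := hI7 s h hpar k hk
      exact ⟨s', hs'1, by rw [hBold s' (by omega)]; exact hs'2⟩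
    · exfalso
      have : s = t := by omega
      omega

lemma step_backward
    (hfresh : ∀ (b : Bool) (S : Set (ℕ → Bool)), S.Finite → ∃ x ∈ cD b, x ∉ S)
    (hcov : ∀ b, ∀ x ∈ cD b, {n | x n = true ∧ n ∉ XS}.Finite)
    (hdens : ∀ (b : Bool) (p : Finset ℕ) (M' : ℕ), ∃ n e, M' ≤ n ∧ (∀ i ∈ p, i < n) ∧
      e ∈ cD b ∧ (∀ i, i < n → e i = decide (i ∈ p)) ∧ (∀ i, n ≤ i → e i = true → i ∈ XS))
    (hu : cD false = Set.range u) (hv : cD true = Set.range v)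
    (t : ℕ) (ht : t % 2 = 1) (F : Full) (hF : Inv cD XS u v F t) :
    ∃ F' : Full, (∀ i, i ≤ t → F'.M i = F.M i) ∧ (∀ s, s < t → F'.A s = F.A s) ∧
      (∀ s, s < t → F'.B s = F.B s) ∧ Inv cD XS u v F' (t+1) := by
  classical
  obtain ⟨hM0, hM, hQ, hI6, hI7⟩ := hF
  set S : Set (ℕ → Bool) := F.B '' (Set.Iio t) with hS
  have hSfin : S.Finite := (Set.finite_Iio t).image _
  have hex : ∃ k, v k ∉ S := by
    obtain ⟨x, hx1, hx2⟩ := hfresh true S hSfin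
    rw [hv] at hx1
    obtain ⟨k, rfl⟩ := hx1
    exact ⟨k, hx2⟩
  set k₀ := Nat.find hex with hk₀
  set bb := v k₀ with hbb
  have hbD : bb ∈ cD true := by rw [hv]; exact Set.mem_range_self _
  have hbS : bb ∉ S := Nat.find_spec hex
  have hbne : ∀ s, s < t → bb ≠ F.B s := by
    intro s hs hc
    exact hbS ⟨s, hs, hc.symm⟩
  set wit : ℕ → ℕ := fun s =>
    if h : bb ≠ F.B s then Classical.choose (Function.ne_iff.mp h) else 0 with hwitdef
  have hwit : ∀ s, s < t → bb (wit s) ≠ F.B s (wit s) := by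
    intro s hs
    have h := hbne s hs
    simp only [hwitdef, dif_pos h]
    exact Classical.choose_spec (Function.ne_iff.mp h)
  set Mnext := max (F.M t) (max (bndOf XS bb) ((Finset.range t).sup wit)) + 1 with hMnext
  have hMn1 : F.M t < Mnext := by
    have := le_max_left (F.M t) (max (bndOf XS bb) ((Finset.range t).sup wit))
    omega
  have hgar : ∀ i, bb i = true → i ∉ XS → i < Mnext := by
    intro i h1 h2
    have h3 := bndOf_spec (hcov true bb hbD) h1 h2
    have := le_max_left (bndOf XS bb) ((Finset.range t).sup wit)
    have := le_max_right (F.M t) (max (bndOf XS bb) ((Finset.range t).sup wit))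
    omega
  have hwitlt : ∀ s, s < t → wit s < Mnext := by
    intro s hs
    have h1 : wit s ≤ (Finset.range t).sup wit :=
      Finset.le_sup (Finset.mem_range.mpr hs)
    have := le_max_right (bndOf XS bb) ((Finset.range t).sup wit)
    have := le_max_right (F.M t) (max (bndOf XS bb) ((Finset.range t).sup wit))
    omega
  set M' := newM F t Mnext with hM'def
  have hM'm : StrictMono M' := newM_mono hM hMn1
  have hM'0 : M' 0 = 0 := newM_zero hM0
  have hM'succ : M' (t+1) = Mnext := newM_succ
  have hMe : ∀ i, i ≤ t → F.M i = M' i := fun i hi => (newM_eq hi).symm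
  set G : Full := ⟨M', F.A, F.B⟩ with hG
  have hQG : ∀ s, s < t → Q cD XS G s := fun s hs =>
    Q_transfer (F' := G) hM hM0 hM'm hM'0 (fun i hi => hMe i (by omega))
      (fun _ _ => rfl) (fun _ _ => rfl) (hQ s hs)
  set q : Finset ℕ :=
    (Finset.range Mnext).filter (fun n => Tm M' F.A F.B (blk M' n) bb n = true) with hq
  obtain ⟨n₁, a, hn₁, hqn₁, haD, hagr, htail⟩ := hdens false q Mnext
  have hagr' : ∀ n, n < Mnext → a n = Tm M' F.A F.B (blk M' n) bb n := by
    intro n hn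
    rw [hagr n (lt_of_lt_of_le hn hn₁)]
    by_cases hg : Tm M' F.A F.B (blk M' n) bb n = true
    · rw [hg]
      have : n ∈ q := by
        rw [hq, Finset.mem_filter, Finset.mem_range]
        exact ⟨hn, hg⟩
      simp [this]
    · have hg' : Tm M' F.A F.B (blk M' n) bb n = false := by
        revert hg; cases Tm M' F.A F.B (blk M' n) bb n <;> simp
      rw [hg']
      have : n ∉ q := by
        rw [hq, Finset.mem_filter]
        rintro ⟨-, hc⟩
        exact hg hc
      simp [this]
  have hafresh : ∀ i, Mnext ≤ i → a i = true → i ∈ XS := by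
    intro i hi hai
    rcases Nat.lt_or_ge i n₁ with h1 | h1
    · exfalso
      have := hagr i h1
      rw [hai] at this
      have hip : i ∈ q := of_decide_eq_true this.symm
      rw [hq, Finset.mem_filter, Finset.mem_range] at hip
      omega
    · exact htail i h1 hai
  -- key computation: the Gm-image of a agrees with bb below Mnext
  have hAga : Ag (M' (t+1)) a (hhi M' F.A F.B bb) := by
    intro m hm
    have hm' : m < Mnext := by rw [← hM'succ]; exact hm
    exact hagr' m hm'
  have hkey : ∀ n, n < Mnext → Gm M' F.A F.B (blk M' n) a n = bb n := by
    intro n hn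
    have hnM' : n < M' (t+1) := by rw [hM'succ]; exact hn
    have hblk : blk M' n ≤ t := Nat.lt_succ_iff.mp (blk_lt_of_lt hM'm hM'0 hnM')
    have hc : M' (blk M' n + 1) ≤ M' (t+1) := hM'm.monotone (by omega)
    have h1 : Gm M' F.A F.B (blk M' n) a n
        = Gm M' F.A F.B (blk M' n) (hhi M' F.A F.B bb) n :=
      g_agree hM'm hc hAga n hnM'
    have h2 : Gm M' F.A F.B (blk M' n) (hhi M' F.A F.B bb) n
        = hh M' F.A F.B (hhi M' F.A F.B bb) n := rfl
    rw [h1, h2, inv_right hM'm hM'0]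
  set F' : Full := ⟨M', Function.update F.A t a, Function.update F.B t bb⟩ with hF'
  have hAold : ∀ s, s < t → F'.A s = F.A s := by
    intro s hs
    exact Function.update_of_ne (by omega) _ _
  have hBold : ∀ s, s < t → F'.B s = F.B s := by
    intro s hs
    exact Function.update_of_ne (by omega) _ _
  have hAnew : F'.A t = a := Function.update_self _ _ _
  have hBnew : F'.B t = bb := Function.update_self _ _ _
  have hMold : ∀ i, i ≤ t → F'.M i = F.M i := fun i hi => newM_eq hi
  have hQold : ∀ s, s < t → Q cD XS F' s := by
    intro s hs
    refine Q_transfer (F := G) (F' := F') hM'm hM'0 hM'm hM'0 (fun i hi => rfl)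
      (fun s' hs' => (hAold s' (by omega)).symm) (fun s' hs' => (hBold s' (by omega)).symm)
      (hQG s hs)
  have hQt : Q cD XS F' t := by
    refine ⟨by rw [hAnew]; exact haD, by rw [hBnew]; exact hbD, ?_, ?_, ?_, ?_⟩
    · -- I2
      intro n hn hne
      rw [hAnew, hBnew] at hne
      have hnM : Mnext ≤ n := by
        have h2 : F'.M (t+1) = Mnext := hM'succ
        omega
      by_cases hb : bb n = true
      · by_contra hX
        have := hgar n hb hX
        omega
      · have han : a n = true := by
          revert hne hb
          cases a n <;> cases bb n <;> simp
        exact hafresh n hnM han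
    · -- I3a
      intro s hs
      by_contra hcon
      push_neg at hcon
      have hcon' : ∀ n, n < Mnext → a n = F.A s n := by
        intro n hn
        have h1 := hcon n (by have h2 : F'.M (t+1) = Mnext := hM'succ; omega)
        rw [hAnew, hAold s hs] at h1
        exact not_not.mp (by simpa using h1)
      have hAg2 : Ag (M' (t+1)) a (F.A s) := by
        intro m hm
        exact hcon' m (by rw [← hM'succ]; exact hm)
      have hH6 := stageH6 (F := G) hM'm hM'0 hQG s hs
      have hbbB : ∀ n, n < Mnext → bb n = F.B s n := by
        intro n hn
        have hnM' : n < M' (t+1) := by rw [hM'succ]; exact hn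
        have hblk : blk M' n ≤ t := Nat.lt_succ_iff.mp (blk_lt_of_lt hM'm hM'0 hnM')
        have hc : M' (blk M' n + 1) ≤ M' (t+1) := hM'm.monotone (by omega)
        have h1 : Gm M' F.A F.B (blk M' n) a n = Gm M' F.A F.B (blk M' n) (F.A s) n :=
          g_agree hM'm hc hAg2 n hnM'
        have h2 : hh M' F.A F.B (F.A s) n = F.B s n := hH6 n hblk
        rw [← hkey n hn, h1]
        exact h2
      exact hwit s hs (hbbB (wit s) (hwitlt s hs))
    · -- I3b
      intro s hs
      refine ⟨wit s, ?_, ?_⟩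
      · have h2 : F'.M (t+1) = Mnext := hM'succ
        have := hwitlt s hs
        omega
      · rw [hBnew, hBold s hs]; exact hwit s hs
    · -- I4
      intro n hn
      have hn' : n < Mnext := by have h2 : F'.M (t+1) = Mnext := hM'succ; omega
      have hnM' : n < M' (t+1) := by rw [hM'succ]; exact hn'
      have hblk : blk M' n ≤ t := Nat.lt_succ_iff.mp (blk_lt_of_lt hM'm hM'0 hnM')
      have hgm : Gm F'.M F'.A F'.B (blk M' n) (F'.A t) = Gm M' F.A F.B (blk M' n) a := by
        rw [hAnew]
        exact gm_congr (fun i _ => rfl)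
          (fun s' hs' => hAold s' (by omega))
          (fun s' hs' => hBold s' (by omega)) a
      have hcalc : F'.B t n = Gm F'.M F'.A F'.B (blk M' n) (F'.A t) n := by
        rw [hBnew, congrFun hgm n, hkey n hn']
      exact hcalc
  refine ⟨F', hMold, hAold, hBold, hM'0, hM'm, ?_, ?_, ?_⟩
  · intro s hs
    rcases Nat.lt_or_ge s t with h | h
    · exact hQold s h
    · have : s = t := by omega
      rw [this]
      exact hQt
  · -- I6
    intro s hs hpar k hk
    rcases Nat.lt_or_ge s t with h | h
    · obtain ⟨s', hs'1, hs'2⟩ := hI6 s h hpar k hk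
      exact ⟨s', hs'1, by rw [hAold s' (by omega)]; exact hs'2⟩
    · exfalso
      have : s = t := by omega
      omega
  · -- I7
    intro s hs hpar k hk
    rcases Nat.lt_or_ge s t with h | h
    · obtain ⟨s', hs'1, hs'2⟩ := hI7 s h hpar k hk
      exact ⟨s', hs'1, by rw [hBold s' (by omega)]; exact hs'2⟩
    · have hst : s = t := by omega
      rw [hst] at hk ⊢
      by_cases hkS : v k ∈ S
      · obtain ⟨s', hs', heq⟩ := hkS
        simp only [Set.mem_Iio] at hs'
        exact ⟨s', by omega, by rw [hBold s' hs']; exact heq⟩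
      · have hk₀k : k₀ ≤ k := by
          by_contra hlt
          push_neg at hlt
          exact hkS (not_not.mp (fun hc => (Nat.find_min hex hlt) hc))
        have hkk₀ : k = k₀ := by
          by_contra hne
          have hlt : k₀ < k := by omega
          obtain ⟨s', hs'le, heq⟩ := hI7 (t-2) (by omega) (by omega) k₀ (by omega)
          exact hbS ⟨s', by simp only [Set.mem_Iio]; omega, heq⟩
        exact ⟨t, le_rfl, by rw [hBnew, hkk₀]⟩

end Step

-- ** assembling the construction **

section Chain

variable (cD : Bool → Set (ℕ → Bool)) (XS : Set ℕ) (u v : ℕ → ℕ → Bool)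

/-- the increasing chain of stages -/
noncomputable def chain (F₀ : Full) (h0 : Inv cD XS u v F₀ 0)
    (step : ∀ t F, Inv cD XS u v F t → ∃ F' : Full, (∀ i, i ≤ t → F'.M i = F.M i) ∧
      (∀ s, s < t → F'.A s = F.A s) ∧ (∀ s, s < t → F'.B s = F.B s) ∧
      Inv cD XS u v F' (t+1)) :
    ∀ t, {F : Full // Inv cD XS u v F t}
  | 0 => ⟨F₀, h0⟩
  | (t+1) =>
      let p := chain F₀ h0 step t
      ⟨(step t p.1 p.2).choose, (step t p.1 p.2).choose_spec.2.2.2⟩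

lemma chain_succ (F₀ : Full) (h0 : Inv cD XS u v F₀ 0)
    (step : ∀ t F, Inv cD XS u v F t → ∃ F' : Full, (∀ i, i ≤ t → F'.M i = F.M i) ∧
      (∀ s, s < t → F'.A s = F.A s) ∧ (∀ s, s < t → F'.B s = F.B s) ∧
      Inv cD XS u v F' (t+1)) (t : ℕ) :
    (∀ i, i ≤ t → (chain cD XS u v F₀ h0 step (t+1)).1.M i
        = (chain cD XS u v F₀ h0 step t).1.M i) ∧
    (∀ s, s < t → (chain cD XS u v F₀ h0 step (t+1)).1.A s
        = (chain cD XS u v F₀ h0 step t).1.A s) ∧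
    (∀ s, s < t → (chain cD XS u v F₀ h0 step (t+1)).1.B s
        = (chain cD XS u v F₀ h0 step t).1.B s) := by
  have hspec := (step t (chain cD XS u v F₀ h0 step t).1
    (chain cD XS u v F₀ h0 step t).2).choose_spec
  exact ⟨hspec.1, hspec.2.1, hspec.2.2.1⟩

end Chain

-- ** the master theorem **

lemma toSet_injective : Function.Injective (toSet (α := ℕ)) := by
  intro x y h
  funext n
  have h2 : (x n = true) = (y n = true) := congrArg (fun S => n ∈ S) h
  cases hx : x n <;> cases hy : y n <;> simp_all

lemma idl {I : Set (Set ℕ)} (hI : IsIdealOn I) {XS : Set ℕ} (hXSI : XS ∈ I)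
    {x y : ℕ → Bool} (hx : toSet x ∈ I) (hdiff : ∀ n, y n ≠ x n → n ∈ XS) :
    toSet y ∈ I := by
  refine hI.2.2.2 (toSet x ∪ XS) (toSet y) (hI.2.2.1 _ _ hx hXSI) ?_
  intro n hn
  by_cases hxn : x n = true
  · exact Or.inl hxn
  · refine Or.inr (hdiff n ?_)
    intro hc
    have hn' : y n = true := hn
    rw [hc] at hn'
    exact hxn hn' 

lemma master (I : Set (Set ℕ)) (hI : IsIdealOn I) (hfin : ContainsFinites I)
    (hP : IsPIdealOn I) (hNM : NonMeagerFamily I)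
    (D₀ D₁ : Set (Set ℕ)) (h0c : D₀.Countable) (h1c : D₁.Countable)
    (h0s : D₀ ⊆ I) (h1s : D₁ ⊆ I)
    (h0d : cantorCopy I ⊆ closure (cantorCopy D₀))
    (h1d : cantorCopy I ⊆ closure (cantorCopy D₁)) :
    ∃ h : (ℕ → Bool) ≃ₜ (ℕ → Bool),
      h '' cantorCopy D₀ = cantorCopy D₁ ∧ h '' cantorCopy I = cantorCopy I := by
  classical
  set cD : Bool → Set (ℕ → Bool) :=
    fun b => if b then cantorCopy D₁ else cantorCopy D₀ with hcD
  have hsub : ∀ b, cD b ⊆ cantorCopy I := by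
    intro b
    cases b
    · exact fun x hx => h0s hx
    · exact fun x hx => h1s hx
  have hdense : ∀ b, cantorCopy I ⊆ closure (cD b) := by
    intro b
    cases b
    · exact h0d
    · exact h1d
  have hcnt : ∀ b, (cD b).Countable := by
    intro b
    cases b
    · exact (h0c.preimage toSet_injective)
    · exact (h1c.preimage toSet_injective)
  have hIne : (fun _ : ℕ => false) ∈ cantorCopy I := by
    have : toSet (fun _ : ℕ => false) = (∅ : Set ℕ) := by
      ext n; simp [toSet]
    show toSet _ ∈ I
    rw [this]
    exact hI.1
  have hne : ∀ b, (cD b).Nonempty := by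
    intro b
    obtain ⟨e, he, -⟩ := dense_approx (hdense b hIne) 0
    exact ⟨e, he⟩
  obtain ⟨XS, hXSI, hcov, hdens⟩ :=
    key_density hI hfin hP hNM cD hsub hdense hcnt hne
  have hcov' : ∀ b, ∀ x ∈ cD b, {n | x n = true ∧ n ∉ XS}.Finite := hcov
  have hfresh : ∀ (b : Bool) (S : Set (ℕ → Bool)), S.Finite → ∃ x ∈ cD b, x ∉ S := by
    intro b S hSf
    by_contra hcon
    push_neg at hcon
    exact not_subset_countable hNM (hdense b) hSf.countable hSf.isClosed hcon
  obtain ⟨u, hu⟩ := (hcnt false).exists_eq_range (hne false)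
  obtain ⟨v, hv⟩ := (hcnt true).exists_eq_range (hne true)
  have step : ∀ t F, Inv cD XS u v F t → ∃ F' : Full, (∀ i, i ≤ t → F'.M i = F.M i) ∧
      (∀ s, s < t → F'.A s = F.A s) ∧ (∀ s, s < t → F'.B s = F.B s) ∧
      Inv cD XS u v F' (t+1) := by
    intro t F hF
    rcases Nat.mod_two_eq_zero_or_one t with hpar | hpar
    · exact step_forward hfresh hcov' hdens hu hv t hpar F hF
    · exact step_backward hfresh hcov' hdens hu hv t hpar F hF
  set F₀ : Full := ⟨id, fun _ _ => false, fun _ _ => false⟩ with hF₀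
  have h0 : Inv cD XS u v F₀ 0 := by
    refine ⟨rfl, strictMono_id, ?_, ?_, ?_⟩ <;> intro s hs <;> omega
  set ch := chain cD XS u v F₀ h0 step with hch
  -- final data
  set Mf : ℕ → ℕ := fun i => (ch i).1.M i with hMf
  set Af : ℕ → ℕ → Bool := fun s => (ch (s+1)).1.A s with hAf
  set Bf : ℕ → ℕ → Bool := fun s => (ch (s+1)).1.B s with hBf
  have hMstab : ∀ i t, i ≤ t → (ch t).1.M i = Mf i := by
    intro i t
    induction t with
    | zero =>
      intro hit
      have : i = 0 := by omega
      rw [this]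
    | succ t IH =>
      intro hit
      rcases Nat.lt_or_ge i (t+1) with h | h
      · have h1 := (chain_succ cD XS u v F₀ h0 step t).1 i (by omega)
        rw [hch] at *
        rw [h1]
        exact IH (by omega)
      · have : i = t + 1 := by omega
        rw [this]
  have hAstab : ∀ s t, s < t → (ch t).1.A s = Af s := by
    intro s t
    induction t with
    | zero => intro h; omega
    | succ t IH =>
      intro hst
      rcases Nat.lt_or_ge s t with h | h
      · have h1 := (chain_succ cD XS u v F₀ h0 step t).2.1 s h
        rw [hch] at *
        rw [h1]
        exact IH h
      · have : t = s := by omega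
        rw [this]
  have hBstab : ∀ s t, s < t → (ch t).1.B s = Bf s := by
    intro s t
    induction t with
    | zero => intro h; omega
    | succ t IH =>
      intro hst
      rcases Nat.lt_or_ge s t with h | h
      · have h1 := (chain_succ cD XS u v F₀ h0 step t).2.2 s h
        rw [hch] at *
        rw [h1]
        exact IH h
      · have : t = s := by omega
        rw [this]
  have hM0f : Mf 0 = 0 := by
    have : (ch 0).1.M 0 = Mf 0 := hMstab 0 0 le_rfl
    rw [← this]
    rfl
  have hMmono : StrictMono Mf := by
    apply strictMono_nat_of_lt_succ
    intro i
    have h1 : (ch (i+1)).1.M i = Mf i := hMstab i (i+1) (by omega)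
    have h2 : (ch (i+1)).1.M (i+1) = Mf (i+1) := hMstab (i+1) (i+1) le_rfl
    rw [← h1, ← h2]
    exact (ch (i+1)).2.2.1 (show i < i + 1 by omega)
  have hQf : ∀ s, Q cD XS ⟨Mf, Af, Bf⟩ s := by
    intro s
    have hinv := (ch (s+1)).2
    refine Q_transfer (F := (ch (s+1)).1) (F' := ⟨Mf, Af, Bf⟩) hinv.2.1 hinv.1
      hMmono hM0f ?_ ?_ ?_ (hinv.2.2.1 s (by omega))
    · intro i hi
      exact hMstab i (s+1) hi
    · intro s' hs'
      exact hAstab s' (s+1) (by omega)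
    · intro s' hs'
      exact hBstab s' (s+1) (by omega)
  have hI6f : ∀ k, ∃ s', Af s' = u k := by
    intro k
    have h6' := (ch (2*k+1)).2.2.2.2.1 (2*k) (by omega) (by omega) k le_rfl
    obtain ⟨s', hs'1, hs'2⟩ := h6'
    refine ⟨s', ?_⟩
    rw [← hAstab s' (2*k+1) (by omega)]
    exact hs'2
  have hI7f : ∀ k, ∃ s', Bf s' = v k := by
    intro k
    have h7' := (ch (2*k+2)).2.2.2.2.2 (2*k+1) (by omega) (by omega) k le_rfl
    obtain ⟨s', hs'1, hs'2⟩ := h7'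
    refine ⟨s', ?_⟩
    rw [← hBstab s' (2*k+2) (by omega)]
    exact hs'2
  -- the homeomorphism
  set e : (ℕ → Bool) ≃ (ℕ → Bool) :=
    ⟨hh Mf Af Bf, hhi Mf Af Bf,
     fun x => inv_left hMmono hM0f, fun y => inv_right hMmono hM0f⟩ with he
  set hmeo : (ℕ → Bool) ≃ₜ (ℕ → Bool) :=
    ⟨e, hh_cont hMmono hM0f, hhi_cont hMmono hM0f⟩ with hhmeo
  have hI2g : ∀ s n, Mf (s+1) ≤ n → Af s n ≠ Bf s n → n ∈ XS := by
    intro s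
    exact (hQf s).2.2.1
  have hAB : ∀ s, hh Mf Af Bf (Af s) = Bf s := by
    intro s
    funext n
    refine h6 hMmono hM0f (T := max (s+1) (blk Mf n + 1)) (by omega) ?_ ?_ n (by omega)
    · intro s' s'' hlt hs'
      exact (hQf s').2.2.2.2.1 s'' hlt
    · exact (hQf s).2.2.2.2.2
  refine ⟨hmeo, ?_, ?_⟩
  · -- image of D₀
    apply Set.Subset.antisymm
    · rintro y ⟨x, hx, rfl⟩
      have hx' : x ∈ Set.range u := by rw [← hu]; exact hx
      obtain ⟨k, rfl⟩ := hx'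
      obtain ⟨s', hs'⟩ := hI6f k
      have : hmeo (u k) = Bf s' := by
        show hh Mf Af Bf (u k) = Bf s'
        rw [← hs']
        exact hAB s'
      rw [this]
      exact (hQf s').2.1
    · intro y hy
      have hy' : y ∈ Set.range v := by rw [← hv]; exact hy
      obtain ⟨k, rfl⟩ := hy'
      obtain ⟨s', hs'⟩ := hI7f k
      refine ⟨Af s', (hQf s').1, ?_⟩
      show hh Mf Af Bf (Af s') = v k
      rw [hAB s']
      exact hs'
  · -- image of I
    apply Set.Subset.antisymm
    · rintro y ⟨x, hx, rfl⟩
      show toSet (hh Mf Af Bf x) ∈ I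
      exact idl hI hXSI hx (fun n hn => hh_diff hMmono hM0f hI2g hn)
    · intro y hy
      refine ⟨hhi Mf Af Bf y, ?_, ?_⟩
      · show toSet (hhi Mf Af Bf y) ∈ I
        exact idl hI hXSI hy (fun n hn => hhi_diff hMmono hM0f hI2g hn)
      · show hh Mf Af Bf (hhi Mf Af Bf y) = y
        exact inv_right hMmono hM0f

end S14


/-- For a non-meager P-ideal `I` and countable dense subsets `D₀`, `D₁` of `I` there is
an autohomeomorphism of the whole Cantor space with `h[D₀] = D₁` and `h[I] = I`. -/
theorem stmt14 (I : Set (Set ℕ)) (hI : IsIdealOn I) (hfin : ContainsFinites I)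
    (hP : IsPIdealOn I) (hNM : NonMeagerFamily I)
    (D₀ D₁ : Set (Set ℕ)) (h0c : D₀.Countable) (h1c : D₁.Countable)
    (h0d : DenseIn D₀ I) (h1d : DenseIn D₁ I) :
    ∃ h : (ℕ → Bool) ≃ₜ (ℕ → Bool),
      h '' cantorCopy D₀ = cantorCopy D₁ ∧ h '' cantorCopy I = cantorCopy I := by
  obtain ⟨h, e1, e2⟩ := S14.master I hI hfin hP hNM D₀ D₁ h0c h1c h0d.1 h1d.1 h0d.2 h1d.2
  exact ⟨h, e1, e2⟩
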